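/- Semiselective Galvin lemma for FIN_k^∞: Given a family F of finite block sequences of FIN_k, a semiselective coideal H ⊆ FIN_k^∞, and A ∈ H, there exists B ∈ H with B ≤ A such that either (1) no finite block sequence that is a condensation of B belongs to F, or (2) every C ∈ [∅, B] has some initial segment r_n(C) ∈ F. -/

import Mathlib

open scoped symmDiff

namespace FINkSpace

/-- The support of `p : ℕ → ℕ`. -/
def supp (p : ℕ → ℕ) : Set ℕ := {n | p n ≠ 0}

/-- `p` is an element of `FIN_k`: values at most `k`, finite support, `k` attained. -/
def IsFINk (k : ℕ) (p : ℕ → ℕ) : Prop :=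
  (∀ n, p n ≤ k) ∧ (supp p).Finite ∧ ∃ n, p n = k

/-- The tetris operation `T(p)(n) = max (p n - 1) 0` (truncated subtraction). -/
def tetris (p : ℕ → ℕ) : ℕ → ℕ := fun n => p n - 1

/-- `A` is an infinite block sequence of elements of `FIN_k`. -/
def IsBlockSeq (k : ℕ) (A : ℕ → ℕ → ℕ) : Prop :=
  (∀ n, IsFINk k (A n)) ∧ ∀ n i j, A n i ≠ 0 → A (n + 1) j ≠ 0 → i < j

/-- `p` belongs to the combinatorial span `[B]`:
`p = T^{(i₀)}(B n₀) + ⋯ + T^{(i_l)}(B n_l)` with `n₀ < ⋯ < n_l` and some `i_j = 0`.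
Note `T^{(i)}(q) m = q m - i` (truncated subtraction). -/
def InSpan (k : ℕ) (B : ℕ → ℕ → ℕ) (p : ℕ → ℕ) : Prop :=
  ∃ (l : ℕ) (n : Fin (l + 1) → ℕ) (i : Fin (l + 1) → ℕ),
    StrictMono n ∧ (∀ j, i j ≤ k) ∧ (∃ j, i j = 0) ∧
    p = fun m => ∑ j, (B (n j) m - i j)

/-- `A ≤ B` : `A` is a condensation of `B` (every term of `A` lies in `[B]`). -/
def Cond (k : ℕ) (A B : ℕ → ℕ → ℕ) : Prop := ∀ n, InSpan k B (A n)

/-- `A ≤* B` : all but finitely many terms of `A` lie in `[B]`. -/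
def AlmostCond (k : ℕ) (A B : ℕ → ℕ → ℕ) : Prop := ∃ N, ∀ n, N ≤ n → InSpan k B (A n)

/-- `a` is a finite block sequence of elements of `FIN_k`. -/
def IsFinBlockSeq (k : ℕ) (a : List (ℕ → ℕ)) : Prop :=
  (∀ p ∈ a, IsFINk k p) ∧
  ∀ m, m + 1 < a.length → ∀ i j,
    (a.getD m fun _ => 0) i ≠ 0 → (a.getD (m + 1) fun _ => 0) j ≠ 0 → i < j

/-- `p` belongs to the span of the finite block sequence `a`. -/
def InSpanList (k : ℕ) (a : List (ℕ → ℕ)) (p : ℕ → ℕ) : Prop :=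
  ∃ (l : ℕ) (n : Fin (l + 1) → ℕ) (i : Fin (l + 1) → ℕ),
    StrictMono n ∧ (∀ j, n j < a.length) ∧ (∀ j, i j ≤ k) ∧ (∃ j, i j = 0) ∧
    p = fun m => ∑ j, ((a.getD (n j) fun _ => 0) m - i j)

/-- `rList n A` is the finite block sequence of the first `n` blocks of `A`. -/
def rList (n : ℕ) (A : ℕ → ℕ → ℕ) : List (ℕ → ℕ) := (List.range n).map A

/-- `b ≤_fin a` : every term of the finite block sequence `b` lies in the span of `a`. -/
def LeFin (k : ℕ) (b a : List (ℕ → ℕ)) : Prop :=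
  IsFinBlockSeq k b ∧ ∀ p ∈ b, InSpanList k a p

/-- The Ellentuck-type basic set `[a,A]`. -/
def Basic (k : ℕ) (a : List (ℕ → ℕ)) (A : ℕ → ℕ → ℕ) : Set (ℕ → ℕ → ℕ) :=
  {B | IsBlockSeq k B ∧ rList a.length B = a ∧ Cond k B A}

/-- `depth_A(a)` : the least `n` with `a ≤_fin r_n(A)`. -/
noncomputable def depth (k : ℕ) (A : ℕ → ℕ → ℕ) (a : List (ℕ → ℕ)) : ℕ :=
  sInf {n | ∀ p ∈ a, InSpanList k (rList n A) p}

/-- `a ∈ FIN_k^{<∞} ↾ A` : `a` is a finite block sequence all whose terms lie in `[A]`. -/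
def FinCond (k : ℕ) (a : List (ℕ → ℕ)) (A : ℕ → ℕ → ℕ) : Prop :=
  IsFinBlockSeq k a ∧ ∀ p ∈ a, InSpan k A p

end FINkSpace

namespace FINkSpace

/-- A coideal on `FIN_k^∞` (Definition of coideal in the paper). -/
structure Coideal (k : ℕ) where
  mem : (ℕ → ℕ → ℕ) → Prop
  blockseq : ∀ A, mem A → IsBlockSeq k A
  finiteChanges : ∀ A B, mem A → IsBlockSeq k B → (Set.range A ∆ Set.range B).Finite → mem B
  upward : ∀ A B, mem A → IsBlockSeq k B → Cond k A B → mem B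
  a3_1 : ∀ A, mem A → ∀ a, FinCond k a A →
    ∀ B, mem B → B ∈ Basic k (rList (depth k A a) A) A → (Basic k a B).Nonempty
  a3_2 : ∀ A, mem A → ∀ a, FinCond k a A →
    ∀ B, mem B → Cond k B A → (Basic k a B).Nonempty →
      ∃ A', mem A' ∧ A' ∈ Basic k (rList (depth k A a) A) A ∧
        (Basic k a A').Nonempty ∧ Basic k a A' ⊆ Basic k a B
  a4 : ∀ A, mem A → ∀ a, FinCond k a A → ∀ O : Set (List (ℕ → ℕ)),
    ∃ B, mem B ∧ B ∈ Basic k (rList (depth k A a) A) A ∧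
      ({b | ∃ C ∈ Basic k a B, b = rList (a.length + 1) C} ⊆ O ∨
       {b | ∃ C ∈ Basic k a B, b = rList (a.length + 1) C} ∩ O = ∅)

/-- `D` is dense open in `S` (with respect to the condensation order). -/
def DenseOpenIn (k : ℕ) (D S : Set (ℕ → ℕ → ℕ)) : Prop :=
  D ⊆ S ∧ (∀ A ∈ S, ∃ B ∈ D, Cond k B A) ∧
  ∀ A B, A ∈ S → B ∈ D → Cond k A B → A ∈ D

/-- `H` is a selective coideal. -/
def Selective (k : ℕ) (H : Coideal k) : Prop :=
  ∀ a A, H.mem A → (Basic k a A).Nonempty →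
    ∀ As : ℕ → ℕ → ℕ → ℕ,
      (∀ n, H.mem (As n) ∧ Cond k (As n) A ∧ Cond k (As (n + 1)) (As n) ∧
        (Basic k a (As n)).Nonempty) →
      ∃ B, H.mem B ∧ B ∈ Basic k a A ∧
        ∀ b, FinCond k b B → Basic k b B ⊆ Basic k b (As (depth k A b))

/-- `H` is a semiselective coideal. -/
def Semiselective (k : ℕ) (H : Coideal k) : Prop :=
  ∀ A, H.mem A →
    ∀ D : List (ℕ → ℕ) → Set (ℕ → ℕ → ℕ),
      (∀ a, FinCond k a A →
        DenseOpenIn k (D a) ({B | H.mem B} ∩ Basic k (rList (depth k A a) A) A)) →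
      ∀ C, H.mem C → Cond k C A →
        ∃ B, H.mem B ∧ Cond k B C ∧
          ∃ As : List (ℕ → ℕ) → ℕ → ℕ → ℕ,
            (∀ a, FinCond k a A → As a ∈ D a) ∧
            ∀ a, FinCond k a B → Basic k a B ⊆ Basic k a (As a)

end FINkSpace

namespace FINkSpace

section Aux

variable {k : ℕ}

@[simp] lemma rList_length (n : ℕ) (A : ℕ → ℕ → ℕ) : (rList n A).length = n := by
  simp [rList]

lemma rList_getD {j n : ℕ} (h : j < n) (A : ℕ → ℕ → ℕ) (d : ℕ → ℕ) :
    (rList n A).getD j d = A j := by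
  rw [List.getD_eq_getElem _ _ (by simpa using h)]
  simp [rList]

lemma mem_rList {p : ℕ → ℕ} {n : ℕ} {A : ℕ → ℕ → ℕ} :
    p ∈ rList n A ↔ ∃ j < n, A j = p := by
  simp [rList]

lemma rList_prefix {m n : ℕ} (h : m ≤ n) (A : ℕ → ℕ → ℕ) :
    rList m A = (rList n A).take m := by
  simp [rList, ← List.map_take, List.take_range, Nat.min_eq_left h]

lemma inSpan_self (X : ℕ → ℕ → ℕ) (n : ℕ) : InSpan k X (X n) := by
  refine ⟨0, fun _ => n, fun _ => 0, ?_, fun _ => Nat.zero_le _, ⟨0, rfl⟩, ?_⟩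
  · intro a b hab
    exact absurd (Fin.fin_one_eq_zero a ▸ Fin.fin_one_eq_zero b ▸ hab) (lt_irrefl _)
  · funext m; simp

lemma cond_refl (X : ℕ → ℕ → ℕ) : Cond k X X := fun n => inSpan_self X n

lemma blockseq_lt (hk : 1 ≤ k) {A : ℕ → ℕ → ℕ} (hA : IsBlockSeq k A) {m m' x y : ℕ}
    (h : m < m') (hx : A m x ≠ 0) (hy : A m' y ≠ 0) : x < y := by
  induction m' generalizing y with
  | zero => omega
  | succ t IH =>
    rcases Nat.lt_succ_iff_lt_or_eq.mp h with h' | h'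
    · obtain ⟨z, hz⟩ := (hA.1 t).2.2
      have hz0 : A t z ≠ 0 := by rw [hz]; omega
      exact lt_trans (IH h' hz0) (hA.2 t z y hz0 hy)
    · subst h'
      exact hA.2 m x y hx hy

lemma supp_unique (hk : 1 ≤ k) {A : ℕ → ℕ → ℕ} (hA : IsBlockSeq k A) {m m' x : ℕ}
    (hx : A m x ≠ 0) (hx' : A m' x ≠ 0) : m = m' := by
  rcases lt_trichotomy m m' with h | h | h
  · exact absurd (blockseq_lt hk hA h hx hx') (lt_irrefl x)
  · exact h
  · exact absurd (blockseq_lt hk hA h hx' hx) (lt_irrefl x)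

/-- Coefficient-style description of the span. -/
def SpanC (k : ℕ) (B : ℕ → ℕ → ℕ) (p : ℕ → ℕ) : Prop :=
  ∃ (s : Finset ℕ) (c : ℕ → ℕ), s.Nonempty ∧ (∀ m, c m ≤ k) ∧ (∃ m ∈ s, c m = 0) ∧
    p = fun x => ∑ m ∈ s, (B m x - c m)

lemma inSpan_spanC {B : ℕ → ℕ → ℕ} {p : ℕ → ℕ} (h : InSpan k B p) : SpanC k B p := by
  classical
  obtain ⟨l, n, i, hmono, hik, ⟨j₀, hj₀⟩, heq⟩ := h
  set c : ℕ → ℕ := fun m => if h : ∃ j, n j = m then i h.choose else k with hc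
  have hcn : ∀ j, c (n j) = i j := by
    intro j
    have hex : ∃ j', n j' = n j := ⟨j, rfl⟩
    rw [hc]
    simp only [dif_pos hex]
    exact congrArg i (hmono.injective hex.choose_spec)
  refine ⟨Finset.univ.image n, c, ⟨n j₀, Finset.mem_image_of_mem n (Finset.mem_univ _)⟩, ?_,
    ⟨n j₀, Finset.mem_image_of_mem n (Finset.mem_univ _), by rw [hcn j₀, hj₀]⟩, ?_⟩
  · intro m
    rw [hc]
    dsimp only
    split
    · exact hik _
    · exact le_refl k
  · rw [heq]; funext x
    rw [Finset.sum_image (by intro a _ b _ hab; exact hmono.injective hab)]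
    exact Finset.sum_congr rfl fun j _ => by rw [hcn j]

lemma spanC_inSpan {B : ℕ → ℕ → ℕ} {p : ℕ → ℕ} (h : SpanC k B p) : InSpan k B p := by
  obtain ⟨s, c, hne, hck, ⟨m₀, hm₀, hc₀⟩, heq⟩ := h
  have hcard : s.card = (s.card - 1) + 1 := (Nat.succ_pred_eq_of_pos (Finset.card_pos.mpr hne)).symm
  set e := s.orderIsoOfFin hcard with he
  refine ⟨s.card - 1, fun j => (e j : ℕ), fun j => c (e j), ?_, fun j => hck _, ?_, ?_⟩
  · intro a b hab
    exact Subtype.coe_lt_coe.mpr (e.strictMono hab)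
  · refine ⟨e.symm ⟨m₀, hm₀⟩, ?_⟩
    show c ((e (e.symm ⟨m₀, hm₀⟩) : { x // x ∈ s }) : ℕ) = 0
    rw [OrderIso.apply_symm_apply]
    exact hc₀
  · rw [heq]; funext x
    rw [← Finset.sum_coe_sort s (fun m => B m x - c m)]
    exact (Fintype.sum_equiv e.toEquiv _ _ (fun j => rfl)).symm

lemma sum_sub_of_unique {S : Finset ℕ} {f : ℕ → ℕ}
    (h : ∀ m₁ ∈ S, ∀ m₂ ∈ S, f m₁ ≠ 0 → f m₂ ≠ 0 → m₁ = m₂) (d : ℕ) :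
    (∑ m ∈ S, f m) - d = ∑ m ∈ S, (f m - d) := by
  by_cases he : ∃ m ∈ S, f m ≠ 0
  · obtain ⟨m₀, hm₀, hf⟩ := he
    have h1 : ∀ b ∈ S, b ≠ m₀ → f b = 0 := by
      intro b hb hbne
      by_contra hb0
      exact hbne (h b hb m₀ hm₀ hb0 hf)
    have h2 : ∀ b ∈ S, b ≠ m₀ → f b - d = 0 := fun b hb hbne => by rw [h1 b hb hbne]; simp
    rw [Finset.sum_eq_single_of_mem m₀ hm₀ h1, Finset.sum_eq_single_of_mem m₀ hm₀ h2]
  · push_neg at he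
    rw [Finset.sum_eq_zero he, Finset.sum_eq_zero (fun m hm => by rw [he m hm]; simp)]
    simp

end Aux
section Aux2

variable {k : ℕ}

lemma spanC_trans (hk : 1 ≤ k) {A B : ℕ → ℕ → ℕ} {p : ℕ → ℕ}
    (hA : IsBlockSeq k A) (hB : IsBlockSeq k B)
    (hBA : ∀ n, SpanC k A (B n)) (hp : SpanC k B p) : SpanC k A p := by
  classical
  obtain ⟨s, c, hsne, hck, ⟨m₀, hm₀s, hm₀c⟩, hps⟩ := hp
  choose sm cm hsmne hcmk hcm0 hBeq using hBA
  set t : ℕ → Finset ℕ := fun m => (sm m).filter (fun m' => cm m m' + c m < k) with ht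
  -- each B m is positive where some A m' with small coefficient is at max
  have hpos : ∀ m m', m' ∈ t m → ∀ x, A m' x = k → B m x ≠ 0 := by
    intro m m' hm' x hx
    rw [Finset.mem_filter] at hm'
    have h1 : A m' x - cm m m' ≤ ∑ m'' ∈ sm m, (A m'' x - cm m m'') :=
      Finset.single_le_sum (f := fun m'' => A m'' x - cm m m'') (fun _ _ => Nat.zero_le _) hm'.1
    have h2 : B m x = ∑ m'' ∈ sm m, (A m'' x - cm m m'') := by rw [hBeq m]
    rw [h2]
    omega
  have hdisj : ∀ m₁ m₂ : ℕ, m₁ ≠ m₂ → Disjoint (t m₁) (t m₂) := by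
    intro m₁ m₂ hne
    rw [Finset.disjoint_left]
    intro m' h1 h2
    obtain ⟨x, hx⟩ := (hA.1 m').2.2
    have hb1 : B m₁ x ≠ 0 := hpos m₁ m' h1 x hx
    have hb2 : B m₂ x ≠ 0 := hpos m₂ m' h2 x hx
    exact hne (supp_unique hk hB hb1 hb2)
  -- pointwise formula
  have key : ∀ m, ∀ x, B m x - c m = ∑ m' ∈ t m, (A m' x - (cm m m' + c m)) := by
    intro m x
    have h2 : B m x = ∑ m' ∈ sm m, (A m' x - cm m m') := by rw [hBeq m]
    have huniq : ∀ m₁ ∈ sm m, ∀ m₂ ∈ sm m,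
        (A m₁ x - cm m m₁) ≠ 0 → (A m₂ x - cm m m₂) ≠ 0 → m₁ = m₂ := by
      intro m₁ _ m₂ _ hn1 hn2
      have ha1 : A m₁ x ≠ 0 := fun h => hn1 (by rw [h]; simp)
      have ha2 : A m₂ x ≠ 0 := fun h => hn2 (by rw [h]; simp)
      exact supp_unique hk hA ha1 ha2
    rw [h2, sum_sub_of_unique huniq (c m)]
    have hstep : ∀ m' ∈ sm m, A m' x - cm m m' - c m = A m' x - (cm m m' + c m) :=
      fun m' _ => by omega
    rw [Finset.sum_congr rfl hstep]
    rw [← Finset.sum_filter_of_ne (p := fun m' => cm m m' + c m < k)]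
    intro m' _ hne
    by_contra hge
    push_neg at hge
    have : A m' x ≤ k := (hA.1 m').1 x
    omega
  set c' : ℕ → ℕ := fun m' => if h : ∃ m ∈ s, m' ∈ t m then cm h.choose m' + c h.choose else k
    with hc'
  have hc'eq : ∀ m ∈ s, ∀ m' ∈ t m, c' m' = cm m m' + c m := by
    intro m hm m' hm'
    have hex : ∃ mm ∈ s, m' ∈ t mm := ⟨m, hm, hm'⟩
    rw [hc']
    simp only [dif_pos hex]
    have hspec := hex.choose_spec
    by_cases heq : hex.choose = m
    · rw [heq]
    · exact absurd (Finset.disjoint_left.mp (hdisj _ _ heq) hspec.2 hm') (fun h => h)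
  obtain ⟨m'₀, hm'₀, hcm'₀⟩ := hcm0 m₀
  have hm'₀t : m'₀ ∈ t m₀ := by
    rw [ht]
    simp only [Finset.mem_filter]
    exact ⟨hm'₀, by omega⟩
  refine ⟨s.biUnion t, c', ⟨m'₀, Finset.mem_biUnion.mpr ⟨m₀, hm₀s, hm'₀t⟩⟩, ?_, ?_, ?_⟩
  · intro m'
    rw [hc']
    dsimp only
    split
    · next h =>
      have hspec := h.choose_spec
      have := (Finset.mem_filter.mp hspec.2).2
      omega
    · exact le_refl k
  · refine ⟨m'₀, Finset.mem_biUnion.mpr ⟨m₀, hm₀s, hm'₀t⟩, ?_⟩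
    rw [hc'eq m₀ hm₀s m'₀ hm'₀t]
    omega
  · rw [hps]; funext x
    rw [Finset.sum_biUnion ?_]
    · refine Finset.sum_congr rfl ?_
      intro m hm
      rw [key m x]
      exact Finset.sum_congr rfl fun m' hm' => by rw [hc'eq m hm m' hm']
    · intro m₁ _ m₂ _ hne
      exact hdisj m₁ m₂ hne

lemma inSpan_trans (hk : 1 ≤ k) {A B : ℕ → ℕ → ℕ} {p : ℕ → ℕ}
    (hA : IsBlockSeq k A) (hB : IsBlockSeq k B)
    (hBA : Cond k B A) (hp : InSpan k B p) : InSpan k A p :=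
  spanC_inSpan (spanC_trans hk hA hB (fun n => inSpan_spanC (hBA n)) (inSpan_spanC hp))

lemma cond_trans (hk : 1 ≤ k) {A B C : ℕ → ℕ → ℕ}
    (hA : IsBlockSeq k A) (hB : IsBlockSeq k B)
    (hBA : Cond k B A) (hCB : Cond k C B) : Cond k C A :=
  fun n => inSpan_trans hk hA hB hBA (hCB n)

end Aux2
section Aux3

variable {k : ℕ}

lemma inSpan_exists_bound {X : ℕ → ℕ → ℕ} {p : ℕ → ℕ} (hp : InSpan k X p) :
    ∃ N, InSpanList k (rList N X) p ∧ ∀ x, p x ≠ 0 → ∃ m < N, X m x ≠ 0 := by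
  obtain ⟨l, n, i, hmono, hik, h0, heq⟩ := hp
  refine ⟨n (Fin.last l) + 1, ⟨l, n, i, hmono, ?_, hik, h0, ?_⟩, ?_⟩
  · intro j
    rw [rList_length]
    exact Nat.lt_succ_of_le (hmono.monotone (Fin.le_last j))
  · rw [heq]; funext x
    refine Finset.sum_congr rfl fun j _ => ?_
    rw [rList_getD (Nat.lt_succ_of_le (hmono.monotone (Fin.le_last j)))]
  · intro x hx
    rw [heq] at hx
    obtain ⟨j, _, hj⟩ := Finset.exists_ne_zero_of_sum_ne_zero hx
    exact ⟨n j, Nat.lt_succ_of_le (hmono.monotone (Fin.le_last j)), fun h => hj (by rw [h]; simp)⟩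

lemma inSpanList_mono {X : ℕ → ℕ → ℕ} {p : ℕ → ℕ} {N M : ℕ} (hNM : N ≤ M)
    (h : InSpanList k (rList N X) p) : InSpanList k (rList M X) p := by
  obtain ⟨l, n, i, hmono, hbd, hik, h0, heq⟩ := h
  have hbd' : ∀ j, n j < N := fun j => by have := hbd j; rwa [rList_length] at this
  refine ⟨l, n, i, hmono, fun j => by rw [rList_length]; have := hbd' j; omega, hik, h0, ?_⟩
  rw [heq]; funext x
  refine Finset.sum_congr rfl fun j _ => ?_
  rw [rList_getD (hbd' j), rList_getD (show n j < M by have := hbd' j; omega)]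

lemma inSpan_of_inSpanList_rList {X : ℕ → ℕ → ℕ} {p : ℕ → ℕ} {N : ℕ}
    (h : InSpanList k (rList N X) p) : InSpan k X p := by
  obtain ⟨l, n, i, hmono, hbd, hik, h0, heq⟩ := h
  have hbd' : ∀ j, n j < N := fun j => by have := hbd j; rwa [rList_length] at this
  refine ⟨l, n, i, hmono, hik, h0, ?_⟩
  rw [heq]; funext x
  exact Finset.sum_congr rfl fun j _ => by rw [rList_getD (hbd' j)]

lemma list_bound {X : ℕ → ℕ → ℕ} {b : List (ℕ → ℕ)} (hb : ∀ p ∈ b, InSpan k X p) :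
    ∃ N, (∀ p ∈ b, InSpanList k (rList N X) p) ∧
      ∀ p ∈ b, ∀ x, p x ≠ 0 → ∃ m < N, X m x ≠ 0 := by
  induction b with
  | nil => exact ⟨0, by simp, by simp⟩
  | cons q b IH =>
    obtain ⟨N₁, hN₁, hN₁'⟩ := IH (fun p hp => hb p (List.mem_cons_of_mem q hp))
    obtain ⟨N₂, hN₂, hN₂'⟩ := inSpan_exists_bound (hb q List.mem_cons_self)
    refine ⟨max N₁ N₂, ?_, ?_⟩
    · intro p hp
      rcases List.mem_cons.mp hp with h | h
      · subst h; exact inSpanList_mono (le_max_right N₁ N₂) hN₂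
      · exact inSpanList_mono (le_max_left N₁ N₂) (hN₁ p h)
    · intro p hp x hx
      rcases List.mem_cons.mp hp with h | h
      · subst h; obtain ⟨m, hm, h'⟩ := hN₂' x hx; exact ⟨m, by omega, h'⟩
      · obtain ⟨m, hm, h'⟩ := hN₁' p h x hx; exact ⟨m, by omega, h'⟩

lemma depth_mem_fix {X : ℕ → ℕ → ℕ} {b : List (ℕ → ℕ)} (hb : ∀ p ∈ b, InSpan k X p) :
    ∀ p ∈ b, InSpanList k (rList (depth k X b) X) p := by
  obtain ⟨N, hN, _⟩ := list_bound hb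
  exact Nat.sInf_mem (⟨N, hN⟩ : Set.Nonempty {n | ∀ p ∈ b, InSpanList k (rList n X) p})

lemma depth_eq {X Y : ℕ → ℕ → ℕ} {b : List (ℕ → ℕ)} (hb : ∀ p ∈ b, InSpan k X p)
    (hpre : rList (depth k X b) Y = rList (depth k X b) X) :
    depth k Y b = depth k X b := by
  set d := depth k X b with hd
  have hmemY : d ∈ {n | ∀ p ∈ b, InSpanList k (rList n Y) p} := by
    intro p hp
    rw [hpre]
    exact depth_mem_fix hb p hp
  have hlow : ∀ n < d, n ∉ {n | ∀ p ∈ b, InSpanList k (rList n Y) p} := by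
    intro n hn hmem
    have hpre' : rList n Y = rList n X := by
      rw [rList_prefix (le_of_lt hn) Y, rList_prefix (le_of_lt hn) X, hpre]
    have : n ∈ {n | ∀ p ∈ b, InSpanList k (rList n X) p} := by
      intro p hp
      have := hmem p hp
      rwa [hpre'] at this
    exact Nat.notMem_of_lt_sInf hn this
  refine le_antisymm (Nat.sInf_le hmemY) ?_
  by_contra hlt
  push_neg at hlt
  exact hlow _ hlt (Nat.sInf_mem ⟨d, hmemY⟩)

lemma mem_basic_rList {n : ℕ} {X B : ℕ → ℕ → ℕ} :
    B ∈ Basic k (rList n X) X ↔ IsBlockSeq k B ∧ rList n B = rList n X ∧ Cond k B X := by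
  show IsBlockSeq k B ∧ rList (rList n X).length B = rList n X ∧ Cond k B X ↔ _
  rw [rList_length]

lemma mem_basic {a : List (ℕ → ℕ)} {X B : ℕ → ℕ → ℕ} :
    B ∈ Basic k a X ↔ IsBlockSeq k B ∧ rList a.length B = a ∧ Cond k B X := Iff.rfl

lemma basic_mono (hk : 1 ≤ k) {a : List (ℕ → ℕ)} {Y Z : ℕ → ℕ → ℕ}
    (hZ : IsBlockSeq k Z) (hY : IsBlockSeq k Y) (hYZ : Cond k Y Z) :
    Basic k a Y ⊆ Basic k a Z :=
  fun C hC => ⟨hC.1, hC.2.1, cond_trans hk hZ hY hYZ hC.2.2⟩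

lemma finCond_mono (hk : 1 ≤ k) {a : List (ℕ → ℕ)} {X Y : ℕ → ℕ → ℕ}
    (hY : IsBlockSeq k Y) (hX : IsBlockSeq k X) (hXY : Cond k X Y)
    (h : FinCond k a X) : FinCond k a Y :=
  ⟨h.1, fun p hp => inSpan_trans hk hY hX hXY (h.2 p hp)⟩

lemma finCond_nil {X : ℕ → ℕ → ℕ} : FinCond k [] X :=
  ⟨⟨fun p hp => absurd hp List.not_mem_nil, fun m hm => by simp at hm⟩,
   fun p hp => absurd hp List.not_mem_nil⟩

lemma isFinBlockSeq_rList {C : ℕ → ℕ → ℕ} (hC : IsBlockSeq k C) (n : ℕ) :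
    IsFinBlockSeq k (rList n C) := by
  constructor
  · intro p hp
    obtain ⟨j, _, rfl⟩ := mem_rList.1 hp
    exact hC.1 j
  · intro m hm i j hi hj
    rw [rList_length] at hm
    rw [rList_getD (by omega)] at hi
    rw [rList_getD hm] at hj
    exact hC.2 m i j hi hj

lemma finCond_append_left {a : List (ℕ → ℕ)} {p : ℕ → ℕ} {X : ℕ → ℕ → ℕ}
    (hb : FinCond k (a ++ [p]) X) : FinCond k a X := by
  refine ⟨⟨fun q hq => hb.1.1 q (List.mem_append_left _ hq), ?_⟩,
    fun q hq => hb.2 q (List.mem_append_left _ hq)⟩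
  intro m hm i j hi hj
  have hm' : m + 1 < (a ++ [p]).length := by
    rw [List.length_append, List.length_singleton]
    omega
  have h1 : (a ++ [p]).getD m (fun _ => 0) = a.getD m (fun _ => 0) :=
    List.getD_append _ _ _ _ (by omega)
  have h2 : (a ++ [p]).getD (m + 1) (fun _ => 0) = a.getD (m + 1) (fun _ => 0) :=
    List.getD_append _ _ _ _ hm
  exact hb.1.2 m hm' i j (h1 ▸ hi) (h2 ▸ hj)

end Aux3
section Aux4

variable {k : ℕ}

/-- Every finite block sequence condensing `X ∈ H` is realized by a member of `H`. -/
lemma exists_mem_basic (hk : 1 ≤ k) {H : Coideal k} {X : ℕ → ℕ → ℕ} {b : List (ℕ → ℕ)}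
    (hX : H.mem X) (hb : FinCond k b X) :
    ∃ Y, H.mem Y ∧ Y ∈ Basic k b X := by
  classical
  obtain ⟨N, _, hbd⟩ := list_bound hb.2
  have hXb : IsBlockSeq k X := H.blockseq X hX
  set L := b.length with hL
  set Y : ℕ → ℕ → ℕ := fun n => if n < L then b.getD n (fun _ => 0) else X (n - L + N) with hY
  have hYlt : ∀ n, n < L → Y n = b.getD n (fun _ => 0) := fun n hn => by
    rw [hY]; simp only [if_pos hn]
  have hYge : ∀ n, ¬ n < L → Y n = X (n - L + N) := fun n hn => by
    rw [hY]; simp only [if_neg hn]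
  have hmem : ∀ n < L, b.getD n (fun _ => 0) ∈ b := by
    intro n hn
    rw [List.getD_eq_getElem _ _ (by omega)]
    exact List.getElem_mem _
  have hYblock : IsBlockSeq k Y := by
    constructor
    · intro n
      by_cases hn : n < L
      · rw [hYlt n hn]; exact hb.1.1 _ (hmem n hn)
      · rw [hYge n hn]; exact hXb.1 _
    · intro n i j hi hj
      by_cases hn1 : n + 1 < L
      · rw [hYlt n (by omega)] at hi
        rw [hYlt (n+1) hn1] at hj
        exact hb.1.2 n (by omega) i j hi hj
      · by_cases hn : n < L
        · -- n + 1 = L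
          rw [hYlt n hn] at hi
          rw [hYge (n+1) hn1] at hj
          have hidx : n + 1 - L + N = N := by omega
          rw [hidx] at hj
          obtain ⟨m, hm, hm0⟩ := hbd _ (hmem n hn) i hi
          exact blockseq_lt hk hXb hm hm0 hj
        · rw [hYge n hn] at hi
          rw [hYge (n+1) hn1] at hj
          have hidx : n + 1 - L + N = (n - L + N) + 1 := by omega
          rw [hidx] at hj
          exact hXb.2 _ i j hi hj
  have hYbasic : Y ∈ Basic k b X := by
    refine ⟨hYblock, ?_, ?_⟩
    · refine List.ext_getElem (by rw [rList_length]) ?_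
      intro j h1 h2
      have hj : j < L := by simpa using h2
      have : (rList L Y)[j] = Y j := by simp [rList]
      rw [rList_length] at h1
      simp only [rList, List.getElem_map, List.getElem_range]
      rw [hYlt j hj, List.getD_eq_getElem _ _ (by omega)]
    · intro n
      by_cases hn : n < L
      · rw [hYlt n hn]; exact hb.2 _ (hmem n hn)
      · rw [hYge n hn]; exact inSpan_self X _
  refine ⟨Y, ?_, hYbasic⟩
  refine H.finiteChanges X Y hX hYblock ?_
  have hsub : (Set.range X ∆ Set.range Y) ⊆ {p | p ∈ b} ∪ X '' (Set.Iio N) := by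
    intro q hq
    rcases Set.mem_symmDiff.mp hq with ⟨⟨m, rfl⟩, hnot⟩ | ⟨⟨n, rfl⟩, hnot⟩
    · by_cases hm : m < N
      · exact Or.inr ⟨m, hm, rfl⟩
      · exfalso
        apply hnot
        have hmN : N ≤ m := Nat.le_of_not_lt hm
        refine ⟨m - N + L, ?_⟩
        rw [hYge _ (by omega), show m - N + L - L + N = m by omega]
    · by_cases hn : n < L
      · rw [hYlt n hn]
        exact Or.inl (hmem n hn)
      · exfalso
        apply hnot
        rw [hYge n hn]
        exact ⟨n - L + N, rfl⟩
  exact Set.Finite.subset (Set.Finite.union (List.finite_toSet b)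
    ((Set.finite_Iio N).image X)) hsub

/-- `Y` accepts `a` (with respect to `F`). -/
def Accepts (k : ℕ) (F : Set (List (ℕ → ℕ))) (a : List (ℕ → ℕ)) (Y : ℕ → ℕ → ℕ) : Prop :=
  ∀ C ∈ Basic k a Y, ∃ n, rList n C ∈ F

/-- `Y` rejects `a` (with respect to `F` and `H`). -/
def Rejects (k : ℕ) (H : Coideal k) (F : Set (List (ℕ → ℕ))) (a : List (ℕ → ℕ))
    (Y : ℕ → ℕ → ℕ) : Prop :=
  ∀ Z, H.mem Z → Z ∈ Basic k a Y → ¬ Accepts k F a Z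

lemma accepts_mono {F a Y Z} (h : Basic k a Y ⊆ Basic k a Z) (ha : Accepts k F a Z) :
    Accepts k F a Y := fun C hC => ha C (h hC)

lemma rejects_mono {H : Coideal k} {F a Y Z} (h : Basic k a Y ⊆ Basic k a Z)
    (ha : Rejects k H F a Z) : Rejects k H F a Y :=
  fun W hW hWb => ha W hW (h hWb)

/-- Transfer of depth and spans along membership in `[r_d(X), X]`. -/
lemma S_transfer {X B₀ : ℕ → ℕ → ℕ} {a : List (ℕ → ℕ)}
    (ha : ∀ p ∈ a, InSpan k X p)
    (hB₀ : B₀ ∈ Basic k (rList (depth k X a) X) X) :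
    (∀ p ∈ a, InSpan k B₀ p) ∧ depth k B₀ a = depth k X a ∧
      rList (depth k X a) B₀ = rList (depth k X a) X := by
  obtain ⟨hblock, hpre, hcond⟩ := mem_basic_rList.mp hB₀
  refine ⟨?_, depth_eq ha hpre, hpre⟩
  intro p hp
  have := depth_mem_fix ha p hp
  rw [← hpre] at this
  exact inSpan_of_inSpanList_rList this

end Aux4
/-- Semiselective Galvin lemma for `FIN_k^∞`. -/
theorem semiselective_galvin (k : ℕ) (H : Coideal k) (hH : Semiselective k H)
    (F : Set (List (ℕ → ℕ))) (A : ℕ → ℕ → ℕ) (hA : H.mem A) :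
    ∃ B, H.mem B ∧ Cond k B A ∧
      ((∀ b, FinCond k b B → b ∉ F) ∨
       (∀ C, IsBlockSeq k C → Cond k C B → ∃ n, rList n C ∈ F)) := by
  classical
  by_cases hk : 1 ≤ k
  case neg =>
    have hk0 : k = 0 := by omega
    subst hk0
    by_cases hF : ∃ b, FinCond 0 b A ∧ b ∈ F
    · obtain ⟨b, hb, hbF⟩ := hF
      refine ⟨A, hA, cond_refl A, Or.inr ?_⟩
      intro C hC _
      refine ⟨b.length, ?_⟩
      have hre : rList b.length C = b := by
        refine List.ext_getElem (by rw [rList_length]) ?_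
        intro j h1 h2
        simp only [rList, List.getElem_map, List.getElem_range]
        have h1' : IsFINk 0 (C j) := hC.1 j
        have h2' : IsFINk 0 (b[j]) := hb.1.1 _ (List.getElem_mem _)
        funext x
        have := h1'.1 x
        have := h2'.1 x
        omega
      rw [hre]; exact hbF
    · push_neg at hF
      exact ⟨A, hA, cond_refl A, Or.inl hF⟩
  case pos =>
  have hAblock : IsBlockSeq k A := H.blockseq A hA
  set D₁ : List (ℕ → ℕ) → Set (ℕ → ℕ → ℕ) := fun a =>
    {Y | (H.mem Y ∧ Y ∈ Basic k (rList (depth k A a) A) A) ∧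
      (Accepts k F a Y ∨ Rejects k H F a Y)} with hD₁def
  have hD₁ : ∀ a, FinCond k a A →
      DenseOpenIn k (D₁ a) ({B | H.mem B} ∩ Basic k (rList (depth k A a) A) A) := by
    intro a haA
    refine ⟨fun Y hY => ⟨hY.1.1, hY.1.2⟩, ?_, ?_⟩
    · rintro B₀ ⟨hB₀mem, hB₀basic⟩
      obtain ⟨haB₀, hdeq, hpre⟩ := S_transfer haA.2 hB₀basic
      have hB₀block : IsBlockSeq k B₀ := H.blockseq _ hB₀mem
      have hB₀cond : Cond k B₀ A := (mem_basic_rList.mp hB₀basic).2.2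
      by_cases hrej : ∃ Z, H.mem Z ∧ Z ∈ Basic k a B₀ ∧ Accepts k F a Z
      · obtain ⟨Z, hZmem, hZbasic, hZacc⟩ := hrej
        have hFinB₀ : FinCond k a B₀ := ⟨haA.1, haB₀⟩
        have hZne : (Basic k a Z).Nonempty :=
          ⟨Z, H.blockseq Z hZmem, hZbasic.2.1, cond_refl Z⟩
        obtain ⟨A', hA'mem, hA'basic, hA'ne, hA'sub⟩ :=
          H.a3_2 B₀ hB₀mem a hFinB₀ Z hZmem hZbasic.2.2 hZne
        rw [hdeq] at hA'basic
        obtain ⟨hA'block, hA'pre, hA'cond⟩ := mem_basic_rList.mp hA'basic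
        refine ⟨A', ⟨⟨hA'mem, ?_⟩, Or.inl (accepts_mono hA'sub hZacc)⟩, hA'cond⟩
        exact mem_basic_rList.mpr ⟨hA'block, by rw [hA'pre, hpre],
          cond_trans hk hAblock hB₀block hB₀cond hA'cond⟩
      · refine ⟨B₀, ⟨⟨hB₀mem, hB₀basic⟩, Or.inr ?_⟩, cond_refl B₀⟩
        intro Z hZm hZb hZacc
        exact hrej ⟨Z, hZm, hZb, hZacc⟩
    · rintro X Y ⟨hXmem, hXbasic⟩ ⟨⟨hYmem, hYbasic⟩, hYdec⟩ hXY
      have hsub : Basic k a X ⊆ Basic k a Y :=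
        basic_mono hk (H.blockseq Y hYmem) (H.blockseq X hXmem) hXY
      refine ⟨⟨hXmem, hXbasic⟩, ?_⟩
      rcases hYdec with h | h
      · exact Or.inl (accepts_mono hsub h)
      · exact Or.inr (rejects_mono hsub h)
  obtain ⟨B, hBmem, hBA, As, hAs1, hAs2⟩ := hH A hA D₁ hD₁ A hA (cond_refl A)
  have hBblock : IsBlockSeq k B := H.blockseq B hBmem
  have hdec : ∀ a, FinCond k a B → Accepts k F a B ∨ Rejects k H F a B := by
    intro a haB
    have haA : FinCond k a A := finCond_mono hk hAblock hBblock hBA haB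
    have hmemD : As a ∈ D₁ a := hAs1 a haA
    have hsub : Basic k a B ⊆ Basic k a (As a) := hAs2 a haB
    rcases hmemD.2 with h | h
    · exact Or.inl (accepts_mono hsub h)
    · exact Or.inr (rejects_mono hsub h)
  by_cases hacc : Accepts k F [] B
  · refine ⟨B, hBmem, hBA, Or.inr ?_⟩
    intro C hC hCB
    exact hacc C ⟨hC, by simp [rList], hCB⟩
  · have hrej0 : Rejects k H F [] B := (hdec [] finCond_nil).resolve_left hacc
    set O : Set (List (ℕ → ℕ)) := {b | Rejects k H F b B} with hO
    set D₂ : List (ℕ → ℕ) → Set (ℕ → ℕ → ℕ) := fun a =>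
      {Y | (H.mem Y ∧ Y ∈ Basic k (rList (depth k B a) B) B) ∧
        ({b | ∃ C ∈ Basic k a Y, b = rList (a.length + 1) C} ⊆ O ∨
         {b | ∃ C ∈ Basic k a Y, b = rList (a.length + 1) C} ∩ O = ∅)} with hD₂def
    have hD₂ : ∀ a, FinCond k a B →
        DenseOpenIn k (D₂ a) ({Y | H.mem Y} ∩ Basic k (rList (depth k B a) B) B) := by
      intro a haB
      refine ⟨fun Y hY => ⟨hY.1.1, hY.1.2⟩, ?_, ?_⟩
      · rintro Y₀ ⟨hY₀mem, hY₀basic⟩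
        obtain ⟨haY₀, hdeq, hpre⟩ := S_transfer haB.2 hY₀basic
        have hY₀block : IsBlockSeq k Y₀ := H.blockseq _ hY₀mem
        have hY₀cond : Cond k Y₀ B := (mem_basic_rList.mp hY₀basic).2.2
        have hFinY₀ : FinCond k a Y₀ := ⟨haB.1, haY₀⟩
        obtain ⟨Y, hYmem, hYbasic, halt⟩ := H.a4 Y₀ hY₀mem a hFinY₀ O
        rw [hdeq] at hYbasic
        obtain ⟨hYblock, hYpre, hYcond⟩ := mem_basic_rList.mp hYbasic
        refine ⟨Y, ⟨⟨hYmem, ?_⟩, halt⟩, hYcond⟩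
        exact mem_basic_rList.mpr ⟨hYblock, by rw [hYpre, hpre],
          cond_trans hk hBblock hY₀block hY₀cond hYcond⟩
      · rintro X Y ⟨hXmem, hXbasic⟩ ⟨⟨hYmem, hYbasic⟩, hYalt⟩ hXY
        have hsub : Basic k a X ⊆ Basic k a Y :=
          basic_mono hk (H.blockseq Y hYmem) (H.blockseq X hXmem) hXY
        have hext : {b | ∃ C ∈ Basic k a X, b = rList (a.length + 1) C} ⊆
            {b | ∃ C ∈ Basic k a Y, b = rList (a.length + 1) C} := by
          rintro b ⟨C, hC, rfl⟩
          exact ⟨C, hsub hC, rfl⟩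
        refine ⟨⟨hXmem, hXbasic⟩, ?_⟩
        rcases hYalt with h | h
        · exact Or.inl (fun b hb => h (hext hb))
        · refine Or.inr (Set.eq_empty_iff_forall_notMem.mpr ?_)
          rintro b ⟨hb1, hb2⟩
          exact Set.eq_empty_iff_forall_notMem.mp h b ⟨hext hb1, hb2⟩
    obtain ⟨B', hB'mem, hB'B, As₂, h1, h2⟩ := hH B hBmem D₂ hD₂ B hBmem (cond_refl B)
    have hB'block : IsBlockSeq k B' := H.blockseq B' hB'mem
    have rejAll : ∀ b, FinCond k b B' → Rejects k H F b B := by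
      intro b
      induction b using List.reverseRecOn with
      | nil => exact fun _ => hrej0
      | append_singleton a p IH =>
        intro hb
        have ha : FinCond k a B' := finCond_append_left hb
        have hRa : Rejects k H F a B := IH ha
        have haB : FinCond k a B := finCond_mono hk hBblock hB'block hB'B ha
        obtain ⟨⟨hAs₂mem, hAs₂basic⟩, halt⟩ := h1 a haB
        have hAs₂block : IsBlockSeq k (As₂ a) := H.blockseq _ hAs₂mem
        obtain ⟨hqq, hAs₂pre, hAs₂cond⟩ := mem_basic_rList.mp hAs₂basic
        have hFinAs₂ : FinCond k a (As₂ a) := by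
          refine ⟨haB.1, fun q hq => ?_⟩
          have hmem := depth_mem_fix haB.2 q hq
          rw [← hAs₂pre] at hmem
          exact inSpan_of_inSpanList_rList hmem
        have hsub : Basic k a B' ⊆ Basic k a (As₂ a) := h2 a ha
        rcases halt with hsubO | hempty
        · obtain ⟨Cb, hCbmem, hCbbasic⟩ := exists_mem_basic hk hB'mem hb
          have hlen : (a ++ [p]).length = a.length + 1 := by simp
          have hCb1 : rList (a.length + 1) Cb = a ++ [p] := by
            rw [← hlen]; exact hCbbasic.2.1
          have hCba : Cb ∈ Basic k a B' := by
            refine ⟨hCbbasic.1, ?_, hCbbasic.2.2⟩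
            rw [rList_prefix (Nat.le_succ a.length) Cb, hCb1]
            exact List.take_left
          exact hsubO ⟨Cb, hsub hCba, hCb1.symm⟩
        · exfalso
          obtain ⟨Y', hY'mem, hY'basic⟩ := exists_mem_basic hk hAs₂mem hFinAs₂
          have hY'block : IsBlockSeq k Y' := H.blockseq _ hY'mem
          have hY'B : Y' ∈ Basic k a B := ⟨hY'basic.1, hY'basic.2.1,
            cond_trans hk hBblock hAs₂block hAs₂cond hY'basic.2.2⟩
          refine hRa Y' hY'mem hY'B ?_
          intro C hC
          have hCAs : C ∈ Basic k a (As₂ a) :=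
            basic_mono hk hAs₂block hY'block hY'basic.2.2 hC
          have hCB : Cond k C B := cond_trans hk hBblock hAs₂block hAs₂cond hCAs.2.2
          have hb₁O : rList (a.length + 1) C ∉ O := by
            intro hmem
            exact Set.eq_empty_iff_forall_notMem.mp hempty _ ⟨⟨C, hCAs, rfl⟩, hmem⟩
          have hb₁fin : FinCond k (rList (a.length + 1) C) B := by
            refine ⟨isFinBlockSeq_rList hC.1 _, fun q hq => ?_⟩
            obtain ⟨j, _, rfl⟩ := mem_rList.1 hq
            exact hCB j
          have hb₁acc : Accepts k F (rList (a.length + 1) C) B :=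
            (hdec _ hb₁fin).resolve_right hb₁O
          refine hb₁acc C ⟨hC.1, ?_, hCB⟩
          rw [rList_length]
    refine ⟨B', hB'mem, cond_trans hk hAblock hBblock hBA hB'B, Or.inl ?_⟩
    intro b hb hbF
    have hbB : FinCond k b B := finCond_mono hk hBblock hB'block hB'B hb
    obtain ⟨Y', hY'mem, hY'basic⟩ := exists_mem_basic hk hBmem hbB
    refine rejAll b hb Y' hY'mem hY'basic ?_
    intro C hC
    exact ⟨b.length, by rw [hC.2.1]; exact hbF⟩
end FINkSpace
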